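/- Let F ⊆ [0,1] be measurable, let 0 < p < c, let θ : ℝ → [0,1] be a position trajectory with period T > 0 and coverage time τ, and let Z be an accumulation function for θ. Then for every t, Z(t+T) − Z(t) ≥ p·T − c·τ; moreover, if Z(s) > 0 for all s ∈ [t, t+T], then Z(t+T) − Z(t) = p·T − c·τ. -/

import Mathlib

open MeasureTheory Filter Set

/-- A position trajectory `θ : ℝ → [0,1]` with period `T > 0` and coverage time `τ ≥ 0`
for the covered-position set `F ⊆ [0,1]`. -/
def IsTrajectory (F : Set ℝ) (θ : ℝ → ℝ) (T τ : ℝ) : Prop :=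
  (∀ t : ℝ, θ t ∈ Set.Icc (0 : ℝ) 1) ∧ 0 < T ∧ 0 ≤ τ ∧
  (∀ t : ℝ, θ (t + T) = θ t) ∧
  (∀ t : ℝ, (∫ s in t..(t + T), F.indicator (fun _ => (1 : ℝ)) (θ s)) = τ)

/-- An accumulation function for the trajectory `θ`: a locally absolutely continuous
nonnegative function `Z` (written as the integral of a locally integrable derivative `g`)
such that a.e. `Z' = p - c·1_F(θ t)` when `Z > 0` and `Z' = max (p - c·1_F(θ t)) 0`
when `Z = 0`. -/
def IsAccumulation (F : Set ℝ) (p c : ℝ) (θ : ℝ → ℝ) (Z : ℝ → ℝ) : Prop :=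
  (∀ t : ℝ, 0 ≤ Z t) ∧
  ∃ g : ℝ → ℝ, MeasureTheory.LocallyIntegrable g MeasureTheory.volume ∧
    (∀ a b : ℝ, Z b - Z a = ∫ s in a..b, g s) ∧
    (∀ᵐ t : ℝ, (0 < Z t → g t = p - c * F.indicator (fun _ => (1 : ℝ)) (θ t)) ∧
      (Z t = 0 → g t = max (p - c * F.indicator (fun _ => (1 : ℝ)) (θ t)) 0))

/-- Per-cycle change of the accumulation function: over any interval of length one period,
the field changes by at least `p·T − c·τ`, with equality when the field stays positive. -/
theorem per_cycle_change (F : Set ℝ) (hF : MeasurableSet F) (p c : ℝ)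
    (hp : 0 < p) (hpc : p < c) (θ : ℝ → ℝ) (T τ : ℝ)
    (htraj : IsTrajectory F θ T τ) (Z : ℝ → ℝ)
    (hZ : IsAccumulation F p c θ Z) :
    (∀ t : ℝ, p * T - c * τ ≤ Z (t + T) - Z t) ∧
    (∀ t : ℝ, (∀ s ∈ Set.Icc t (t + T), 0 < Z s) →
      Z (t + T) - Z t = p * T - c * τ) := by
  obtain ⟨hθmem, hT, hτ, hper, hcov⟩ := htraj
  obtain ⟨hZ0, g, hgloc, hfund, hae⟩ := hZ
  set h : ℝ → ℝ := fun s => F.indicator (fun _ => (1 : ℝ)) (θ s) with hh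
  -- Z is continuous
  have hZc : Continuous Z := by
    have : ∀ a b : ℝ, IntervalIntegrable g volume a b := fun a b =>
      (hgloc.integrableOn_isCompact isCompact_uIcc).intervalIntegrable
    have hc := intervalIntegral.continuous_primitive this (0 : ℝ)
    have : Z = fun b => Z 0 + ∫ s in (0:ℝ)..b, g s := by
      funext b; have := hfund 0 b; linarith
    rw [this]; exact continuous_const.add hc
  -- h is a.e. strongly measurable
  obtain ⟨g', hg'm, hgg'⟩ := hgloc.aestronglyMeasurable
  set φ : ℝ → ℝ := fun s => if 0 < Z s then (p - g' s) / c else if g' s = 0 then 1 else 0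
    with hφ
  have hφm : Measurable φ := by
    apply Measurable.ite (measurableSet_lt measurable_const hZc.measurable)
    · exact (measurable_const.sub hg'm.measurable).div_const c
    · exact Measurable.ite (hg'm.measurable (measurableSet_singleton 0))
        measurable_const measurable_const
  have hc0 : c ≠ 0 := (show (0:ℝ) < c by linarith).ne'
  have hval : ∀ s, h s = 0 ∨ h s = 1 := by
    intro s
    by_cases hm : θ s ∈ F
    · right; simp [hh, Set.indicator_of_mem hm]
    · left; simp [hh, Set.indicator_of_notMem hm]
  have hhφ : h =ᵐ[volume] φ := by
    filter_upwards [hae, hgg'] with s hs hgs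
    rcases (hZ0 s).lt_or_eq with hzs | hzs
    · have hg := hs.1 hzs
      simp only [hφ, if_pos hzs, ← hgs, hg]
      field_simp
      simp only [hh]; ring
    · have hg := hs.2 hzs.symm
      have hnot : ¬ 0 < Z s := by rw [← hzs]; exact lt_irrefl 0
      by_cases hmem : θ s ∈ F
      · have hgv : g s = 0 := by
          rw [hg, Set.indicator_of_mem hmem, mul_one]
          exact max_eq_right (by linarith)
        have hne : h s = 1 := by simp [hh, Set.indicator_of_mem hmem]
        rw [hne]
        simp only [hφ, if_neg hnot, ← hgs, hgv]
        norm_num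
      · have hgv : g s = p := by
          rw [hg, Set.indicator_of_notMem hmem, mul_zero, sub_zero]
          exact max_eq_left hp.le
        have hne : h s = 0 := by simp [hh, Set.indicator_of_notMem hmem]
        rw [hne]
        simp only [hφ, if_neg hnot, ← hgs, hgv]
        rw [if_neg hp.ne']
  have hhm : AEStronglyMeasurable h volume := ⟨φ, hφm.stronglyMeasurable, hhφ⟩
  have hbd : ∀ s, ‖h s‖ ≤ ‖(1 : ℝ)‖ := by
    intro s; rcases hval s with h' | h' <;> simp [h']
  have hint : ∀ a b : ℝ, IntervalIntegrable h volume a b := by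
    intro a b
    exact (intervalIntegrable_const (c := (1:ℝ))).mono_fun hhm.restrict
      (ae_of_all _ hbd)
  have hgint : ∀ a b : ℝ, IntervalIntegrable g volume a b := fun a b =>
    (hgloc.integrableOn_isCompact isCompact_uIcc).intervalIntegrable
  have hfint : ∀ a b : ℝ, IntervalIntegrable (fun s => p - c * h s) volume a b :=
    fun a b => (intervalIntegrable_const).sub ((hint a b).const_mul c)
  -- value of the integral of p - c*h
  have hintval : ∀ t : ℝ, (∫ s in t..(t + T), (p - c * h s)) = p * T - c * τ := by
    intro t
    rw [intervalIntegral.integral_sub intervalIntegrable_const ((hint t (t+T)).const_mul c),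
      intervalIntegral.integral_const_mul, intervalIntegral.integral_const]
    have : (∫ s in t..(t + T), h s) = τ := hcov t
    rw [this]
    simp only [add_sub_cancel_left, smul_eq_mul]
    ring
  have hge : ∀ᵐ s : ℝ, p - c * h s ≤ g s := by
    filter_upwards [hae] with s hs
    rcases (hZ0 s).lt_or_eq with hzs | hzs
    · rw [hs.1 hzs]
    · rw [hs.2 hzs.symm]; exact le_max_left _ _
  have hle : ∀ t : ℝ, t ≤ t + T := fun t => by linarith
  constructor
  · intro t
    rw [hfund t (t + T), ← hintval t]
    exact intervalIntegral.integral_mono_ae (hle t) (hfint t (t+T)) (hgint t (t+T)) hge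
  · intro t hpos
    rw [hfund t (t + T), ← hintval t]
    apply intervalIntegral.integral_congr_ae
    filter_upwards [hae] with s hs hsmem
    rw [Set.uIoc_of_le (hle t)] at hsmem
    exact hs.1 (hpos s ⟨le_of_lt hsmem.1, hsmem.2⟩)
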